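/- arXiv:1112.1284 — 13 statements merged into one kernel-verified Lean document; each statement's English description precedes it below -/
import Mathlib

section
/- In a relative Frobenius algebra (X,m) with unit subset U, for all f ∈ X and u,v ∈ U: (1) if f·u↓ then u·u↓; (2) if f·u↓ and f·v↓ then u·v↓; (3) if f·u↓ and f·v↓ then u = v. Consequently, for every f ∈ X there is a unique u ∈ U with f·u↓, and (symmetrically) a unique v ∈ U with v·f↓. -/
/-- `m h g f` means `h·g = f`: the product of `h` and `g` is defined and equals `f`. -/
def CondM {X : Type*} (m : X → X → X → Prop) : Prop :=
  (∀ h g f f', m h g f → m h g f' → f = f') ∧ (∀ f, ∃ h g, m h g f)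

def CondA {X : Type*} (m : X → X → X → Prop) : Prop :=
  ∀ f g h x, (∃ k, m f g k ∧ m k h x) ↔ (∃ l, m g h l ∧ m f l x)

def CondF {X : Type*} (m : X → X → X → Prop) : Prop :=
  ∀ a b c d,
    ((∃ x, m a b x ∧ m c d x) ↔ (∃ e, m e d b ∧ m a e c)) ∧
    ((∃ x, m a b x ∧ m c d x) ↔ (∃ e, m e b d ∧ m c e a))

def CondU {X : Type*} (m : X → X → X → Prop) (U : Set X) : Prop :=
  (∀ f, ∃ u ∈ U, m f u f) ∧
  (∀ f, ∃ v ∈ U, m v f f) ∧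
  (∀ f, ∀ u ∈ U, (∃ y, m f u y) → m f u f) ∧
  (∀ f, ∀ u ∈ U, (∃ y, m u f y) → m u f f)

/-- A relative Frobenius algebra: a relation `m ⊆ (X × X) × X` satisfying
(M), (A), (F), with unit subset `U` witnessing (U). -/
def RelFrobenius {X : Type*} (m : X → X → X → Prop) (U : Set X) : Prop :=
  CondM m ∧ CondA m ∧ CondF m ∧ CondU m U

theorem stmt0 {X : Type*} (m : X → X → X → Prop) (U : Set X)
    (hfrob : RelFrobenius m U) :
    (∀ f u v, u ∈ U → v ∈ U →
      ((∃ y, m f u y) → (∃ y, m u u y)) ∧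
      ((∃ y, m f u y) → (∃ y, m f v y) → (∃ y, m u v y)) ∧
      ((∃ y, m f u y) → (∃ y, m f v y) → u = v)) ∧
    (∀ f, ∃! u, u ∈ U ∧ ∃ y, m f u y) ∧
    (∀ f, ∃! v, v ∈ U ∧ ∃ y, m v f y) := by
  obtain ⟨hM, hA, hF, hU1, hU2, hU3, hU4⟩ := hfrob
  have key : ∀ f u v, u ∈ U → v ∈ U → (∃ y, m f u y) → (∃ y, m f v y) → ∃ y, m u v y := by
    intro f u v hu hv hyu hyv
    have h1 : m f u f := hU3 f u hu hyu
    have h2 : m f v f := hU3 f v hv hyv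
    obtain ⟨l, hl, _⟩ := (hA f u v f).mp ⟨f, h1, h2⟩
    exact ⟨l, hl⟩
  have eqkey : ∀ f u v, u ∈ U → v ∈ U → (∃ y, m f u y) → (∃ y, m f v y) → u = v := by
    intro f u v hu hv hyu hyv
    obtain ⟨y, hy⟩ := key f u v hu hv hyu hyv
    have h1 : m u v u := hU3 u v hv ⟨y, hy⟩
    have h2 : m u v v := hU4 v u hu ⟨y, hy⟩
    exact hM.1 u v u v h1 h2
  refine ⟨fun f u v hu hv => ⟨fun hyu => key f u u hu hu hyu hyu,
    key f u v hu hv, eqkey f u v hu hv⟩, ?_, ?_⟩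
  · intro f
    obtain ⟨u, hu, hfu⟩ := hU1 f
    exact ⟨u, ⟨hu, f, hfu⟩, fun v ⟨hv, hyv⟩ => eqkey f v u hv hu hyv ⟨f, hfu⟩⟩
  · intro f
    obtain ⟨v, hv, hvf⟩ := hU2 f
    have eqkey' : ∀ v' , v' ∈ U → (∃ y, m v' f y) → v' = v := by
      intro v' hv' hyv'
      have h1 : m v' f f := hU4 f v' hv' hyv'
      obtain ⟨k, hk, _⟩ := (hA v' v f f).mpr ⟨f, hvf, h1⟩
      have h2 : m v' v v := hU4 v v' hv' ⟨k, hk⟩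
      have h3 : m v' v v' := hU3 v' v hv ⟨k, hk⟩
      exact hM.1 v' v v' v h3 h2
    exact ⟨v, ⟨hv, f, hvf⟩, fun v' ⟨hv', hyv'⟩ => eqkey' v' hv' hyv'⟩
end

section
/- In a relative Frobenius algebra (X,m) with unit subset U, for all g,f ∈ X: g·f↓ if and only if there exists u ∈ U with g·u↓ and u·f↓. (That is, the domain of the multiplication is exactly the pullback of the source and target maps.) -/
theorem stmt1 {X : Type*} (m : X → X → X → Prop) (U : Set X)
    (hfrob : RelFrobenius m U) :
    ∀ g f, (∃ y, m g f y) ↔ ∃ u ∈ U, (∃ y, m g u y) ∧ (∃ y, m u f y) := by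
  obtain ⟨hM, hA, hF, hU1, hU2, hU3, hU4⟩ := hfrob
  intro g f
  constructor
  · rintro ⟨y, hy⟩
    obtain ⟨u, hu, hgu⟩ := hU1 g
    refine ⟨u, hu, ⟨g, hgu⟩, ?_⟩
    obtain ⟨l, hl, _⟩ := (hA g u f y).mp ⟨g, hgu, hy⟩
    exact ⟨l, hl⟩
  · rintro ⟨u, hu, hgu, huf⟩
    have hgu' : m g u g := hU3 g u hu hgu
    have huf' : m u f f := hU4 f u hu huf
    obtain ⟨x, hx, _⟩ := (hF g f g f).1.mpr ⟨u, huf', hgu'⟩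
    exact ⟨x, hx⟩
end

section
/- In a relative Frobenius algebra (X,m) with unit subset U, for all f ∈ X and u ∈ U: f·u↓ if and only if there exists g ∈ X with g·f = u and f·g ∈ U. (In diagrammatic terms: e ∘ s = m ∘ (1 × i) ∘ Δ; every element admits an inverse whose product with it is its source unit.) -/
theorem stmt2 {X : Type*} (m : X → X → X → Prop) (U : Set X)
    (hfrob : RelFrobenius m U) :
    ∀ f u, u ∈ U → ((∃ y, m f u y) ↔ ∃ g, m g f u ∧ ∃ w ∈ U, m f g w) := by
  obtain ⟨hM, hA, hF, hU1, hU2, hU3, hU4⟩ := hfrob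
  intro f u hu
  constructor
  · intro hy
    have hfu : m f u f := hU3 f u hu hy
    obtain ⟨v, hv, hvf⟩ := hU2 f
    obtain ⟨e, hef, hfe⟩ := (hF f u v f).1.mp ⟨f, hfu, hvf⟩
    exact ⟨e, hef, v, hv, hfe⟩
  · rintro ⟨g, hgf, w, hw, hfg⟩
    obtain ⟨x, hx, -⟩ := (hF f u w f).1.mpr ⟨g, hgf, hfg⟩
    exact ⟨x, hx⟩
end

section
/- In a relative Frobenius algebra (X,m) with unit subset U, for every f ∈ X there exists a unique g ∈ X such that f·g ∈ U and g·f ∈ U. (The inverse relation i is the graph of a function.) -/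
theorem stmt3 {X : Type*} (m : X → X → X → Prop) (U : Set X)
    (hfrob : RelFrobenius m U) :
    ∀ f, ∃! g, (∃ u ∈ U, m f g u) ∧ (∃ v ∈ U, m g f v) := by
  obtain ⟨⟨hsv, -⟩, -, hF, hru, hlu, hrun, hlun⟩ := hfrob
  intro f
  -- existence: take a right unit u and a left unit v of f; apply (F)
  obtain ⟨u, hu, hfu⟩ := hru f
  obtain ⟨v, hv, hvf⟩ := hlu f
  obtain ⟨g, hgf, hfg⟩ := ((hF f u v f).1).mp ⟨f, hfu, hvf⟩
  -- now m g f u (so g·f = u ∈ U) and m f g v (so f·g = v ∈ U)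
  refine ⟨g, ⟨⟨v, hv, hfg⟩, ⟨u, hu, hgf⟩⟩, ?_⟩
  rintro g' ⟨⟨u₂, hu₂, hfg'⟩, ⟨v₂, hv₂, hg'f⟩⟩
  -- uniqueness: apply (F) with e = f to get x with g·u₂ = x = u·g'
  obtain ⟨x, hx1, hx2⟩ := ((hF g u₂ u g').1).mpr ⟨f, hfg', hgf⟩
  have h1 : m g u₂ g := hrun g u₂ hu₂ ⟨x, hx1⟩
  have h2 : m u g' g' := hlun g' u hu ⟨x, hx2⟩
  exact (hsv u g' x g' hx2 h2).symm.trans (hsv g u₂ x g hx1 h1)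
end

section
/- Let G be a groupoid, let X = Σ (a b : G), (a ⟶ b) be the type of all its arrows, and let m be the relation on (X × X) × X relating ((g,f), h) exactly when the source of g equals the target of f and h is the composite of f followed by g. Then m satisfies (M), (A), (F), and (U), with unit subset U = { identity arrows 𝟙 a | a an object of G }; that is, the composition relation of a groupoid is a relative Frobenius algebra. -/
open CategoryTheory

namespace Stmt5Aux
variable {G : Type*} [Groupoid G]

abbrev XX (G : Type*) [Groupoid G] := Σ (a : G) (b : G), a ⟶ b

def M : XX G → XX G → XX G → Prop := fun g f h =>
  ∃ (a b c : G) (f' : a ⟶ b) (g' : b ⟶ c),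
    f = ⟨a, b, f'⟩ ∧ g = ⟨b, c, g'⟩ ∧ h = ⟨a, c, f' ≫ g'⟩

lemma mk_inj {a b a' b' : G} {f : a ⟶ b} {f' : a' ⟶ b'}
    (h : (⟨a, b, f⟩ : XX G) = ⟨a', b', f'⟩) : a = a' ∧ b = b' ∧ HEq f f' := by
  injection h with h1 h2
  subst h1
  injection h2 with h3 h4
  subst h3
  exact ⟨rfl, rfl, h4⟩

lemma condM : CondM (M (G := G)) := by
  constructor
  · rintro h g f f' ⟨a, b, c, p, q, rfl, rfl, rfl⟩ ⟨a2, b2, c2, p2, q2, e1, e2, e3⟩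
    obtain ⟨rfl, rfl, hp⟩ := mk_inj e1
    obtain ⟨-, rfl, hq⟩ := mk_inj e2
    cases hp; cases hq
    exact e3.symm
  · rintro ⟨a, b, f0⟩
    exact ⟨⟨a, b, f0⟩, ⟨a, a, 𝟙 a⟩, a, a, b, 𝟙 a, f0, rfl, rfl, by simp⟩

lemma condA : CondA (M (G := G)) := by
  intro f g h x
  constructor
  · rintro ⟨k, ⟨a, b, c, g0, f0, rfl, rfl, rfl⟩, ⟨p, q, r, h0, k0, rfl, e, rfl⟩⟩
    obtain ⟨rfl, rfl, hk⟩ := mk_inj e.symm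
    cases hk
    exact ⟨⟨p, b, h0 ≫ g0⟩, ⟨p, q, b, h0, g0, rfl, rfl, rfl⟩,
      ⟨p, b, r, h0 ≫ g0, f0, rfl, rfl, by simp⟩⟩
  · rintro ⟨l, ⟨p, a, b, h0, g0, rfl, rfl, rfl⟩, ⟨p2, q, c, l0, f0, e, rfl, rfl⟩⟩
    obtain ⟨rfl, rfl, hl⟩ := mk_inj e.symm
    cases hl
    exact ⟨⟨a, c, g0 ≫ f0⟩, ⟨a, q, c, g0, f0, rfl, rfl, rfl⟩,
      ⟨p2, a, c, h0, g0 ≫ f0, rfl, rfl, by simp⟩⟩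

lemma condF : CondF (M (G := G)) := by
  intro a b c d
  constructor
  · constructor
    · rintro ⟨x, ⟨p, q, r, b0, a0, rfl, rfl, rfl⟩, ⟨p2, q2, r2, d0, c0, rfl, rfl, e⟩⟩
      obtain ⟨rfl, rfl, hx⟩ := mk_inj e
      have hx' := eq_of_heq hx
      refine ⟨⟨q2, q, Groupoid.inv d0 ≫ b0⟩,
        ⟨p, q2, q, d0, Groupoid.inv d0 ≫ b0, rfl, rfl, by simp⟩,
        ⟨q2, q, r, Groupoid.inv d0 ≫ b0, a0, rfl, rfl, ?_⟩⟩
      have h2 : (Groupoid.inv d0 ≫ b0) ≫ a0 = c0 := by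
        rw [Category.assoc, hx', ← Category.assoc, Groupoid.inv_comp, Category.id_comp]
      rw [h2]
    · rintro ⟨e, ⟨p, q, r, d0, e0, rfl, rfl, rfl⟩, ⟨p2, q2, r2, e1, a0, ee, rfl, rfl⟩⟩
      obtain ⟨rfl, rfl, he⟩ := mk_inj ee.symm
      cases he
      exact ⟨⟨p, r2, (d0 ≫ e1) ≫ a0⟩, ⟨p, q2, r2, d0 ≫ e1, a0, rfl, rfl, rfl⟩,
        ⟨p, p2, r2, d0, e1 ≫ a0, rfl, rfl, by simp⟩⟩
  · constructor
    · rintro ⟨x, ⟨p, q, r, b0, a0, rfl, rfl, rfl⟩, ⟨p2, q2, r2, d0, c0, rfl, rfl, e⟩⟩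
      obtain ⟨rfl, rfl, hx⟩ := mk_inj e
      have hx' := eq_of_heq hx
      refine ⟨⟨q, q2, Groupoid.inv b0 ≫ d0⟩,
        ⟨p, q, q2, b0, Groupoid.inv b0 ≫ d0, rfl, rfl, by simp⟩,
        ⟨q, q2, r, Groupoid.inv b0 ≫ d0, c0, rfl, rfl, ?_⟩⟩
      have h2 : (Groupoid.inv b0 ≫ d0) ≫ c0 = a0 := by
        rw [Category.assoc, ← hx', ← Category.assoc, Groupoid.inv_comp, Category.id_comp]
      rw [h2]
    · rintro ⟨e, ⟨p, q, r, b0, e0, rfl, rfl, rfl⟩, ⟨p2, q2, r2, e1, c0, ee, rfl, rfl⟩⟩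
      obtain ⟨rfl, rfl, he⟩ := mk_inj ee.symm
      cases he
      exact ⟨⟨p, r2, b0 ≫ e1 ≫ c0⟩, ⟨p, p2, r2, b0, e1 ≫ c0, rfl, rfl, rfl⟩,
        ⟨p, q2, r2, b0 ≫ e1, c0, rfl, rfl, by simp⟩⟩

lemma condU : CondU (M (G := G)) { x : XX G | ∃ a : G, x = ⟨a, a, 𝟙 a⟩ } := by
  refine ⟨?_, ?_, ?_, ?_⟩
  · rintro ⟨a, b, f0⟩
    exact ⟨⟨a, a, 𝟙 a⟩, ⟨a, rfl⟩, a, a, b, 𝟙 a, f0, rfl, rfl, by simp⟩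
  · rintro ⟨a, b, f0⟩
    exact ⟨⟨b, b, 𝟙 b⟩, ⟨b, rfl⟩, a, b, b, f0, 𝟙 b, rfl, rfl, by simp⟩
  · rintro f u ⟨a0, rfl⟩ ⟨y, p, q, r, u1, f1, e1, rfl, rfl⟩
    obtain ⟨rfl, rfl, hu⟩ := mk_inj e1.symm
    cases hu
    exact ⟨q, q, r, 𝟙 q, f1, rfl, rfl, by simp⟩
  · rintro f u ⟨a0, rfl⟩ ⟨y, p, q, r, f1, u1, rfl, e1, rfl⟩
    obtain ⟨rfl, rfl, hu⟩ := mk_inj e1.symm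
    cases hu
    exact ⟨p, r, r, f1, 𝟙 r, rfl, rfl, by simp⟩

end Stmt5Aux

theorem stmt5 (G : Type*) [Groupoid G] :
    let X := Σ (a : G) (b : G), a ⟶ b
    -- `m g f h` holds when the source of `g` is the target of `f` and `h` is the
    -- composite of `f` followed by `g`.
    let m : X → X → X → Prop := fun g f h =>
      ∃ (a b c : G) (f' : a ⟶ b) (g' : b ⟶ c),
        f = ⟨a, b, f'⟩ ∧ g = ⟨b, c, g'⟩ ∧ h = ⟨a, c, f' ≫ g'⟩
    CondM m ∧ CondA m ∧ CondF m ∧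
      CondU m { x : X | ∃ a : G, x = ⟨a, a, 𝟙 a⟩ } := by
  intro X m
  exact ⟨Stmt5Aux.condM, Stmt5Aux.condA, Stmt5Aux.condF, Stmt5Aux.condU⟩
end

section
/- Let (X,m) be a relative Frobenius algebra whose unit subset U is a singleton {u}. Then the multiplication is total (a·b↓ for all a,b ∈ X), and X carries a group structure with identity element u whose multiplication graph is m, i.e., there is a group operation * on X with a·b = c if and only if a * b = c. (Relative Frobenius algebras whose unit is a single element are exactly groups.) -/
theorem stmt6 {X : Type*} (m : X → X → X → Prop) (u : X)
    (hfrob : RelFrobenius m {u}) :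
    (∀ a b, ∃ c, m a b c) ∧
    ∃ G : Group X, letI := G; ((1 : X) = u ∧ ∀ a b c, m a b c ↔ a * b = c) := by
  obtain ⟨⟨hsv, -⟩, hA, hF, hU1, hU2, -, -⟩ := hfrob
  have hru : ∀ f, m f u f := by
    intro f; obtain ⟨v, hv, h⟩ := hU1 f
    simpa [Set.mem_singleton_iff.mp hv] using h
  have hlu : ∀ f, m u f f := by
    intro f; obtain ⟨v, hv, h⟩ := hU2 f
    simpa [Set.mem_singleton_iff.mp hv] using h
  have htot : ∀ a b, ∃ c, m a b c := by
    intro a b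
    have := ((hF a b a b).2).mpr ⟨u, hlu b, hru a⟩
    obtain ⟨x, hx, -⟩ := this
    exact ⟨x, hx⟩
  have hinv : ∀ a, ∃ e, m e a u ∧ m a e u := by
    intro a
    exact (hF a u u a).1.mp ⟨a, hru a, hlu a⟩
  refine ⟨htot, ?_⟩
  classical
  letI : Mul X := ⟨fun a b => Classical.choose (htot a b)⟩
  have hmul : ∀ a b : X, m a b (a * b) := fun a b => Classical.choose_spec (htot a b)
  have heq : ∀ a b c : X, m a b c → a * b = c := fun a b c h => hsv a b _ _ (hmul a b) h
  letI : One X := ⟨u⟩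
  letI : Inv X := ⟨fun a => Classical.choose (hinv a)⟩
  have hinv_spec : ∀ a : X, m a⁻¹ a u ∧ m a a⁻¹ u := fun a => Classical.choose_spec (hinv a)
  letI G : Group X := Group.ofLeftAxioms
    (assoc := by
      intro a b c
      have := (hA a b c (a * b * c)).mp ⟨a * b, hmul a b, hmul (a * b) c⟩
      obtain ⟨l, hl, hal⟩ := this
      rw [← heq b c l hl] at hal
      exact (heq a (b * c) _ hal).symm)
    (one_mul := fun a => heq u a a (hlu a))
    (inv_mul_cancel := fun a => heq _ a u (hinv_spec a).1)
  refine ⟨G, rfl, fun a b c => ⟨heq a b c, ?_⟩⟩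
  rintro rfl
  exact hmul a b
end

section
/- Let (X,m_X) and (Y,m_Y) be relative Frobenius algebras and let r ⊆ X × Y be a relation that preserves multiplication, meaning: for all x,x' ∈ X and w ∈ Y, (∃z, x·x' = z ∧ (z,w) ∈ r) if and only if (∃y y', (x,y) ∈ r ∧ (x',y') ∈ r ∧ y·y' = w). Then r satisfies condition (R): r = { (x₁·x₂, y₁·y₂) | (x₁,y₁) ∈ r, (x₂,y₂) ∈ r, x₁·x₂↓, y₁·y₂↓ }, i.e., every pair in r is a componentwise product of two pairs in r, and componentwise products of pairs in r lie in r. -/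
/-- Condition (R) for a relation `r` between relative Frobenius algebras:
`r` consists exactly of the componentwise products of pairs of elements of `r`. -/
def CondR {X Y : Type*} (mX : X → X → X → Prop) (mY : Y → Y → Y → Prop)
    (r : X → Y → Prop) : Prop :=
  ∀ x y, r x y ↔ ∃ x₁ y₁ x₂ y₂, r x₁ y₁ ∧ r x₂ y₂ ∧ mX x₁ x₂ x ∧ mY y₁ y₂ y

theorem stmt7 {X Y : Type*} (mX : X → X → X → Prop) (UX : Set X)
    (mY : Y → Y → Y → Prop) (UY : Set Y)
    (hX : RelFrobenius mX UX) (hY : RelFrobenius mY UY)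
    (r : X → Y → Prop)
    (hmul : ∀ x x' w, (∃ z, mX x x' z ∧ r z w) ↔ ∃ y y', r x y ∧ r x' y' ∧ mY y y' w) :
    CondR mX mY r := by
  intro x y
  constructor
  · intro hxy
    obtain ⟨h, g, hhg⟩ := hX.1.2 x
    obtain ⟨y₁, y₂, hry1, hry2, hmy⟩ := (hmul h g y).mp ⟨x, hhg, hxy⟩
    exact ⟨h, y₁, g, y₂, hry1, hry2, hhg, hmy⟩
  · rintro ⟨x₁, y₁, x₂, y₂, h1, h2, hx, hy⟩
    obtain ⟨z, hz, hrz⟩ := (hmul x₁ x₂ y).mpr ⟨y₁, y₂, h1, h2, hy⟩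
    rwa [hX.1.1 x₁ x₂ x z hx hz]
end

section
/- In a relative H*-algebra (X,m), for every a ∈ X there exists a* ∈ {a}* satisfying a*·a·a* = a* and a·a*·a = a. (Every element of a relative H*-algebra has a pseudoinverse lying in the star of its singleton.) -/
/-- Condition (H): `star` is an involution on subsets of `X` such that
`x·a = y` for some `a ∈ A` iff `y·a' = x` for some `a' ∈ A*`, and symmetrically. -/
def CondH {X : Type*} (m : X → X → X → Prop) (star : Set X → Set X) : Prop :=
  (∀ A, star (star A) = A) ∧
  ∀ (A : Set X) (x y : X),
    ((∃ a ∈ A, m x a y) ↔ (∃ a' ∈ star A, m y a' x)) ∧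
    ((∃ a ∈ A, m a x y) ↔ (∃ a' ∈ star A, m a' y x))

/-- A relative H*-algebra: a relation satisfying (M), (A) and (H). -/
def RelHstar {X : Type*} (m : X → X → X → Prop) (star : Set X → Set X) : Prop :=
  CondM m ∧ CondA m ∧ CondH m star

/-- `f'` is a pseudoinverse of `f`: `f·f'·f = f` and `f'·f·f' = f'`. -/
def IsPseudoinverse {X : Type*} (m : X → X → X → Prop) (f f' : X) : Prop :=
  (∃ p, m f f' p ∧ m p f f) ∧ (∃ q, m f' f q ∧ m q f' f')

theorem stmt8 {X : Type*} (m : X → X → X → Prop) (star : Set X → Set X)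
    (hstar : RelHstar m star) :
    ∀ a : X, ∃ a' ∈ star {a}, IsPseudoinverse m a a' := by
  obtain ⟨⟨muniq, mtot⟩, condA, hinv, hH⟩ := hstar
  intro f
  -- (M): f = h·g
  obtain ⟨h, g, hhg⟩ := mtot f
  -- (H) with A = {g}: ∃ g' ∈ ({g})*, f·g' = h
  obtain ⟨g', -, hfg'⟩ := ((hH {g} h f).1).mp ⟨g, rfl, hhg⟩
  -- (A): (f·g')·g = f gives e := g'·g with f·e = f
  obtain ⟨e, hg'g, hfe⟩ := (condA f g' g f).mp ⟨h, hfg', hhg⟩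
  -- (H) with A = {f}: f·e = f gives f₁ ∈ ({f})* with f₁·f = e
  obtain ⟨f₁, hf₁mem, hf₁f⟩ := ((hH {f} e f).2).mp ⟨f, rfl, hfe⟩
  -- (A): f·(f₁·f) = f·e = f gives k := f·f₁ with k·f = f
  obtain ⟨k, hff₁, hkf⟩ := (condA f f₁ f f).mpr ⟨e, hf₁f, hfe⟩
  -- e is idempotent: (f₁·f)·e = f₁·(f·e) = f₁·f = e
  obtain ⟨e', he', hee⟩ := (condA f₁ f e e).mpr ⟨f, hfe, hf₁f⟩
  have he'e : e' = e := muniq _ _ _ _ he' hf₁f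
  rw [he'e] at hee
  -- (H) with A = ({f})*: since f₁·f = e, get c ∈ ({f})* with e·c = f₁
  obtain ⟨c, -, hec⟩ := ((hH (star {f}) e f₁).1).mpr ⟨f, by rw [hinv]; rfl, hf₁f⟩
  -- (A): (e·e)·c = e·(e·c) gives e·f₁ = f₁
  obtain ⟨l, hl, hef₁⟩ := (condA e e c f₁).mp ⟨e, hee, hec⟩
  have hlf₁ : l = f₁ := muniq _ _ _ _ hl hec
  rw [hlf₁] at hef₁
  exact ⟨f₁, hf₁mem, ⟨k, hff₁, hkf⟩, ⟨e, hf₁f, hef₁⟩⟩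
end

section
/- In a relative H*-algebra (X,m), if g and h are both pseudoinverses of f ∈ X, then f·g = f·h and g·f = h·f. (The source and target relations s(f) = f*·f and t(f) = f·f* are well-defined functions, independent of the chosen pseudoinverse.) -/
/-- Key lemma: if `p` and `p'` are left units for `f` which are products with
left factor `f`, then `p = p'`. -/
lemma key_lemma {X : Type*} {m : X → X → X → Prop} {star : Set X → Set X}
    (hM : CondM m) (hA : CondA m) (hH : CondH m star)
    {f g h p p' : X} (h1 : m f g p) (h2 : m p f f) (h3 : m f h p') (h4 : m p' f f) :
    p = p' := by
  obtain ⟨uniq, -⟩ := hM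
  obtain ⟨hstar2, hcond⟩ := hH
  -- p·p' = p'
  have hpp' : m p p' p' := by
    obtain ⟨l, hl1, hl2⟩ := (hA p f h p').mp ⟨f, h2, h3⟩
    rwa [uniq f h l p' hl1 h3] at hl2
  -- p'·p = p
  have hp'p : m p' p p := by
    obtain ⟨l, hl1, hl2⟩ := (hA p' f g p).mp ⟨f, h4, h1⟩
    rwa [uniq f g l p hl1 h1] at hl2
  -- p·p = p
  have hppp : m p p p := by
    obtain ⟨l, hl1, hl2⟩ := (hA p f g p).mp ⟨f, h2, h1⟩
    rwa [uniq f g l p hl1 h1] at hl2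
  -- p'·p' = p'
  have hp'p'p' : m p' p' p' := by
    obtain ⟨l, hl1, hl2⟩ := (hA p' f h p').mp ⟨f, h4, h3⟩
    rwa [uniq f h l p' hl1 h3] at hl2
  -- there is a' ∈ ({p})* with p·a' = p'
  obtain ⟨a', ha'S, ha'⟩ : ∃ a' ∈ star {p}, m p a' p' :=
    (hcond {p} p' p).1.mp ⟨p, rfl, hp'p⟩
  -- there is c ∈ ({p})* with c·p' = a'
  obtain ⟨c, hcS, hc⟩ : ∃ c ∈ star {p}, m c p' a' :=
    (hcond {p} a' p').2.mp ⟨p, rfl, ha'⟩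
  -- there is d ∈ ({p'})* with a'·d = c
  obtain ⟨d, hdS, hd⟩ : ∃ d ∈ star {p'}, m a' d c :=
    (hcond {p'} c a').1.mp ⟨p', rfl, hc⟩
  -- from a' ∈ ({p})*: p·c = d
  have hpcd : m p c d := by
    obtain ⟨e, heS, he⟩ := (hcond (star {p}) d c).2.mp ⟨a', ha'S, hd⟩
    rw [hstar2] at heS
    rwa [heS] at he
  -- from c ∈ ({p})*: d·p = p
  have hdpp : m d p p := by
    obtain ⟨e, heS, he⟩ := (hcond (star {p}) p d).1.mp ⟨c, hcS, hpcd⟩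
    rw [hstar2] at heS
    rwa [heS] at he
  -- d·p' = p'
  have hdp'p' : m d p' p' := by
    obtain ⟨k, hk1, hk2⟩ := (hA p c p' p').mpr ⟨a', hc, ha'⟩
    rwa [uniq p c k d hk1 hpcd] at hk2
  -- d·d = d
  have hddd : m d d d := by
    obtain ⟨l, hl1, hl2⟩ := (hA d p c d).mp ⟨p, hdpp, hpcd⟩
    rwa [uniq p c l d hl1 hpcd] at hl2
  -- c·d = c
  have hcdc : m c d c := by
    obtain ⟨k, hk1, hk2⟩ := (hA a' d d c).mpr ⟨d, hddd, hd⟩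
    rwa [uniq a' d k c hk1 hd] at hk2
  -- from d ∈ ({p'})*: c·p' = c
  have hcp'c : m c p' c := by
    obtain ⟨e, heS, he⟩ := (hcond (star {p'}) c c).1.mp ⟨d, hdS, hcdc⟩
    rw [hstar2] at heS
    rwa [heS] at he
  -- hence a' = c, and then d = p'
  have hac : a' = c := uniq c p' a' c hc hcp'c
  have hp'd : p' = d := by
    rw [hac] at ha'
    exact uniq p c p' d ha' hpcd
  -- so p' ∈ ({p'})*, hence p'·p' = p
  rw [← hp'd] at hdS
  have hp'p'p : m p' p' p := by
    obtain ⟨e, heS, he⟩ := (hcond (star {p'}) p p').1.mp ⟨p', hdS, hpp'⟩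
    rw [hstar2] at heS
    rwa [heS] at he
  exact (uniq p' p' p' p hp'p'p' hp'p'p).symm

theorem stmt9 {X : Type*} (m : X → X → X → Prop) (star : Set X → Set X)
    (hstar : RelHstar m star) (f g h : X)
    (hg : IsPseudoinverse m f g) (hh : IsPseudoinverse m f h) :
    (∀ y, m f g y ↔ m f h y) ∧ (∀ y, m g f y ↔ m h f y) := by
  obtain ⟨hM, hA, hH⟩ := hstar
  obtain ⟨⟨p, hfg, hpf⟩, ⟨q, hgf, hqg⟩⟩ := hg
  obtain ⟨⟨p', hfh, hp'f⟩, ⟨q', hhf, hq'h⟩⟩ := hh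
  have uniq := hM.1
  -- f·q = f  where q = g·f
  have hfqf : m f q f := by
    obtain ⟨l, hl1, hl2⟩ := (hA f g f f).mp ⟨p, hfg, hpf⟩
    rwa [uniq g f l q hl1 hgf] at hl2
  -- f·q' = f  where q' = h·f
  have hfq'f : m f q' f := by
    obtain ⟨l, hl1, hl2⟩ := (hA f h f f).mp ⟨p', hfh, hp'f⟩
    rwa [uniq h f l q' hl1 hhf] at hl2
  -- the mirrored multiplication
  have hM' : CondM (fun x y z => m y x z) :=
    ⟨fun a b u v ha hb => hM.1 b a u v ha hb,
     fun x => by obtain ⟨a, b, hab⟩ := hM.2 x; exact ⟨b, a, hab⟩⟩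
  have hA' : CondA (fun x y z => m y x z) := fun a b c x => (hA c b a x).symm
  have hH' : CondH (fun x y z => m y x z) star :=
    ⟨hH.1, fun A x y => ⟨(hH.2 A x y).2, (hH.2 A x y).1⟩⟩
  have hpp' : p = p' := key_lemma hM hA hH hfg hpf hfh hp'f
  have hqq' : q = q' := key_lemma hM' hA' hH' hgf hfqf hhf hfq'f
  constructor
  · intro y
    constructor
    · intro hy
      have : y = p := uniq f g y p hy hfg
      rw [this, hpp']; exact hfh
    · intro hy
      have : y = p' := uniq f h y p' hy hfh
      rw [this, ← hpp']; exact hfg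
  · intro y
    constructor
    · intro hy
      have : y = q := uniq g f y q hy hgf
      rw [this, hqq']; exact hhf
    · intro hy
      have : y = q' := uniq h f y q' hy hhf
      rw [this, ← hqq']; exact hgf
end

section
/- In a relative H*-algebra (X,m), if g* is a pseudoinverse of g, f* is a pseudoinverse of f, and g*·g = f·f* (both defined and equal), then g·f↓. (Composability of the induced semigroupoid: whenever the source of g equals the target of f, the product g·f is defined.) -/
theorem stmt10 {X : Type*} (m : X → X → X → Prop) (star : Set X → Set X)
    (hstar : RelHstar m star) (g f g' f' : X)
    (hg : IsPseudoinverse m g g') (hf : IsPseudoinverse m f f')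
    (heq : ∃ e, m g' g e ∧ m f f' e) :
    ∃ y, m g f y := by
  obtain ⟨⟨hM1, _⟩, hA, _⟩ := hstar
  obtain ⟨e, he1, he2⟩ := heq
  obtain ⟨⟨p, hp1, hp2⟩, _⟩ := hg
  -- from g·g'·g = g, get m g e g
  obtain ⟨l, hl1, hl2⟩ := (hA g g' g g).mp ⟨p, hp1, hp2⟩
  have : l = e := hM1 _ _ _ _ hl1 he1
  rw [this] at hl2
  -- apply A to g, f, f'
  obtain ⟨k, hk1, _⟩ := (hA g f f' g).mpr ⟨e, he2, hl2⟩
  exact ⟨k, hk1⟩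
end

section
/- In a relative H*-algebra (X,m), if h* is a pseudoinverse of h and f·h·h* = g·h* (both sides defined and equal, in the Kleene sense), then f·h = g. (The semigroupoid induced by a relative H*-algebra is locally cancellative.) -/
theorem stmt11 {X : Type*} (m : X → X → X → Prop) (star : Set X → Set X)
    (hstar : RelHstar m star) (f g h h' : X)
    (hps : IsPseudoinverse m h h')
    (heq : ∃ w, (∃ p, m f h p ∧ m p h' w) ∧ m g h' w) :
    m f h g := by
  obtain ⟨⟨hsv, -⟩, hA, hinv, hH⟩ := hstar
  obtain ⟨w, ⟨p, hfhp, hpw⟩, hgw⟩ := heq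
  -- t ∈ star {h'} with w·t = g
  obtain ⟨t, ht, hwt⟩ := (hH {h'} g w).1.mp ⟨h', rfl, hgw⟩
  -- c ∈ star {g} with c·w = h'
  obtain ⟨c, hc, hcw⟩ := (hH {g} h' w).2.mp ⟨g, rfl, hgw⟩
  -- p·(c·w) = p·h' = w, so k := p·c exists with k·w = w
  obtain ⟨k, hpck, hkww⟩ := (hA p c w w).mpr ⟨h', hcw, hpw⟩
  -- c ∈ star {g} and p·c = k give k·g = p
  obtain ⟨g', hg', hkgp⟩ := (hH (star {g}) p k).1.mp ⟨c, hc, hpck⟩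
  rw [hinv] at hg'
  have hg'g : g' = g := hg'
  rw [hg'g] at hkgp
  -- k·(w·t) = k·g = p, so (k·w)·t = p; but k·w = w, so w·t = p
  obtain ⟨k', hkwk', hk'tp⟩ := (hA k w t p).mpr ⟨g, hwt, hkgp⟩
  have hk'w : k' = w := hsv k w k' w hkwk' hkww
  rw [hk'w] at hk'tp
  -- w·t = p and w·t = g, hence p = g
  have hpg : p = g := hsv w t p g hk'tp hwt
  exact hpg ▸ hfhp
end

section
/- Let X be a set and m ⊆ (X × X) × X a relation satisfying (M), (A), and (U). Then m satisfies condition (H) if and only if it satisfies condition (F). (In the presence of units and associativity, the H*-algebra condition is equivalent to the Frobenius condition.) -/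
/-- Auxiliary notion of inverse relative to a unit set `U`. -/
def MyInv {X : Type*} (m : X → X → X → Prop) (U : Set X) (f e : X) : Prop :=
  ∃ u v, u ∈ U ∧ v ∈ U ∧ m e f u ∧ m f e v ∧ m f u f ∧ m v f f

section Aux

variable {X : Type*} {m : X → X → X → Prop} {U : Set X}
variable (hM : CondM m) (hA : CondA m) (hF : CondF m) (hU : CondU m U)

set_option linter.unusedSectionVars false
include hM hA hF hU

theorem runit_unique {f u u' : X} (hu : u ∈ U) (hu' : u' ∈ U)
    (h1 : m f u f) (h2 : m f u' f) : u = u' := by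
  obtain ⟨e, he1, _⟩ := ((hF f u f u').2).mp ⟨f, h1, h2⟩
  have he : m e u e := hU.2.2.1 e u hu ⟨u', he1⟩
  have heq : u' = e := hM.1 e u u' e he1 he
  subst heq
  have h3 : m u' u u := hU.2.2.2 u u' hu' ⟨u', he1⟩
  exact (hM.1 u' u u' u he1 h3).symm

theorem lunit_unique {f v v' : X} (hv : v ∈ U) (hv' : v' ∈ U)
    (h1 : m v f f) (h2 : m v' f f) : v = v' := by
  obtain ⟨e, _, he2⟩ := ((hF v f v' f).1).mp ⟨f, h1, h2⟩
  have he : m v e e := hU.2.2.2 e v hv ⟨v', he2⟩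
  have heq : v' = e := hM.1 v e v' e he2 he
  subst heq
  have h3 : m v v' v := hU.2.2.1 v v' hv' ⟨v', he2⟩
  exact hM.1 v v' v v' h3 he2

theorem myinv_exists (f : X) : ∃ e, MyInv m U f e := by
  obtain ⟨u, hu, hfu⟩ := hU.1 f
  obtain ⟨v, hv, hvf⟩ := hU.2.1 f
  obtain ⟨e, he1, he2⟩ := ((hF f u v f).1).mp ⟨f, hfu, hvf⟩
  exact ⟨e, u, v, hu, hv, he1, he2, hfu, hvf⟩

theorem inv_aux {f e u v : X} (hu : u ∈ U) (hv : v ∈ U)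
    (h1 : m e f u) (h2 : m f e v) : m u e e ∧ m e v e := by
  obtain ⟨x, hx1, hx2⟩ := ((hF u e e v).2).mpr ⟨f, h2, h1⟩
  exact ⟨hU.2.2.2 e u hu ⟨x, hx1⟩, hU.2.2.1 e v hv ⟨x, hx2⟩⟩

theorem myinv_symm {f e : X} (h : MyInv m U f e) : MyInv m U e f := by
  obtain ⟨u, v, hu, hv, h1, h2, _, _⟩ := h
  obtain ⟨h5, h6⟩ := inv_aux hM hA hF hU hu hv h1 h2
  exact ⟨v, u, hv, hu, h2, h1, h6, h5⟩

theorem myinv_unique {f e e' : X} (h : MyInv m U f e) (h' : MyInv m U f e') :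
    e = e' := by
  obtain ⟨u, v, hu, hv, h1, h2, h3, h4⟩ := h
  obtain ⟨u', v', hu', hv', h1', h2', h3', h4'⟩ := h'
  have huu : u = u' := runit_unique hM hA hF hU hu hu' h3 h3'
  have hvv : v = v' := lunit_unique hM hA hF hU hv hv' h4 h4'
  subst huu; subst hvv
  obtain ⟨_, h6⟩ := inv_aux hM hA hF hU hu hv h1 h2
  obtain ⟨h5', _⟩ := inv_aux hM hA hF hU hu hv h1' h2'
  obtain ⟨k, hk1, hk2⟩ := (hA e f e' e).mpr ⟨v, h2', h6⟩
  have hk : k = u := hM.1 e f k u hk1 h1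
  rw [hk] at hk2
  exact hM.1 u e' e e' hk2 h5'

theorem transfer_right {x a y a' : X} (h : m x a y) (hi : MyInv m U a a') :
    m y a' x := by
  obtain ⟨u, v, hu, hv, h1, h2, h3, _⟩ := hi
  obtain ⟨h5, _⟩ := inv_aux hM hA hF hU hu hv h1 h2
  -- m y u y
  obtain ⟨k, hk1, hk2⟩ := (hA x a u y).mpr ⟨a, h3, h⟩
  have hk : k = y := hM.1 x a k y hk1 h
  rw [hk] at hk2
  -- get e with m e a u ∧ m y e x
  obtain ⟨e, he1, he2⟩ := ((hF y u x a).1).mp ⟨y, hk2, h⟩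
  -- e = a'
  obtain ⟨l, hl1, hl2⟩ := (hA e a a' a').mp ⟨u, he1, h5⟩
  have hl : l = v := hM.1 a a' l v hl1 h2
  rw [hl] at hl2
  have hev : m e v e := hU.2.2.1 e v hv ⟨a', hl2⟩
  have hae : a' = e := hM.1 e v a' e hl2 hev
  rw [hae]
  exact he2

theorem transfer_left {a x y a' : X} (h : m a x y) (hi : MyInv m U a a') :
    m a' y x := by
  obtain ⟨u, v, hu, hv, h1, h2, _, h4⟩ := hi
  obtain ⟨_, h6⟩ := inv_aux hM hA hF hU hu hv h1 h2
  -- m v y y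
  obtain ⟨l, hl1, hl2⟩ := (hA v a x y).mp ⟨a, h4, h⟩
  have hl : l = y := hM.1 a x l y hl1 h
  rw [hl] at hl2
  -- get e with m e y x ∧ m a e v
  obtain ⟨e, he1, he2⟩ := ((hF v y a x).2).mp ⟨y, hl2, h⟩
  -- e = a'
  obtain ⟨k, hk1, hk2⟩ := (hA a' a e a').mpr ⟨v, he2, h6⟩
  have hk : k = u := hM.1 a' a k u hk1 h1
  rw [hk] at hk2
  have hue : m u e e := hU.2.2.2 e u hu ⟨a', hk2⟩
  have hae : a' = e := hM.1 u e a' e hk2 hue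
  rw [hae]
  exact he1

end Aux

theorem stmt16 {X : Type*} (m : X → X → X → Prop)
    (hM : CondM m) (hA : CondA m) (hU : ∃ U : Set X, CondU m U) :
    (∃ star : Set X → Set X, CondH m star) ↔ CondF m := by
  constructor
  · rintro ⟨star, hst, hH⟩
    intro a b c d
    constructor
    · constructor
      · rintro ⟨x, hab, hcd⟩
        obtain ⟨d', hd', hxd'c⟩ := (hH {d} c x).1.mp ⟨d, rfl, hcd⟩
        obtain ⟨e, hbd'e, haec⟩ := (hA a b d' c).mp ⟨x, hab, hxd'c⟩
        obtain ⟨a0, ha0, hedb⟩ := (hH (star {d}) b e).1.mp ⟨d', hd', hbd'e⟩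
        rw [hst] at ha0
        rw [Set.mem_singleton_iff] at ha0
        subst ha0
        exact ⟨e, hedb, haec⟩
      · rintro ⟨e, hedb, haec⟩
        obtain ⟨d', hd', hbd'e⟩ := (hH {d} e b).1.mp ⟨d, rfl, hedb⟩
        obtain ⟨k, hk1, hk2⟩ := (hA a b d' c).mpr ⟨e, hbd'e, haec⟩
        obtain ⟨a0, ha0, hcdk⟩ := (hH (star {d}) k c).1.mp ⟨d', hd', hk2⟩
        rw [hst] at ha0
        rw [Set.mem_singleton_iff] at ha0
        subst ha0
        exact ⟨k, hk1, hcdk⟩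
    · constructor
      · rintro ⟨x, hab, hcd⟩
        obtain ⟨c', hc', hc'xd⟩ := (hH {c} d x).2.mp ⟨c, rfl, hcd⟩
        obtain ⟨k, hk1, hk2⟩ := (hA c' a b d).mpr ⟨x, hab, hc'xd⟩
        obtain ⟨a0, ha0, hcka⟩ := (hH (star {c}) a k).2.mp ⟨c', hc', hk1⟩
        rw [hst] at ha0
        rw [Set.mem_singleton_iff] at ha0
        subst ha0
        exact ⟨k, hk2, hcka⟩
      · rintro ⟨e, hebd, hcea⟩
        obtain ⟨c', hc', hc'ae⟩ := (hH {c} e a).2.mp ⟨c, rfl, hcea⟩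
        obtain ⟨l, hl1, hl2⟩ := (hA c' a b d).mp ⟨e, hc'ae, hebd⟩
        obtain ⟨a0, ha0, hcdl⟩ := (hH (star {c}) l d).2.mp ⟨c', hc', hl2⟩
        rw [hst] at ha0
        rw [Set.mem_singleton_iff] at ha0
        subst ha0
        exact ⟨l, hl1, hcdl⟩
  · intro hF
    obtain ⟨U, hU⟩ := hU
    refine ⟨fun A => {e | ∃ a ∈ A, MyInv m U a e}, ?_, ?_⟩
    · intro A
      ext b
      constructor
      · rintro ⟨e, ⟨a, ha, hae⟩, heb⟩
        have hea : MyInv m U e a := myinv_symm hM hA hF hU hae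
        have : a = b := myinv_unique hM hA hF hU hea heb
        subst this
        exact ha
      · intro hb
        obtain ⟨e, hbe⟩ := myinv_exists hM hA hF hU b
        exact ⟨e, ⟨b, hb, hbe⟩, myinv_symm hM hA hF hU hbe⟩
    · intro A x y
      constructor
      · constructor
        · rintro ⟨a, ha, hxa⟩
          obtain ⟨e, hae⟩ := myinv_exists hM hA hF hU a
          exact ⟨e, ⟨a, ha, hae⟩, transfer_right hM hA hF hU hxa hae⟩
        · rintro ⟨a', ⟨a, ha, haa'⟩, hya'⟩
          exact ⟨a, ha, transfer_right hM hA hF hU hya' (myinv_symm hM hA hF hU haa')⟩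
      · constructor
        · rintro ⟨a, ha, hax⟩
          obtain ⟨e, hae⟩ := myinv_exists hM hA hF hU a
          exact ⟨e, ⟨a, ha, hae⟩, transfer_left hM hA hF hU hax hae⟩
        · rintro ⟨a', ⟨a, ha, haa'⟩, ha'y⟩
          exact ⟨a, ha, transfer_left hM hA hF hU ha'y (myinv_symm hM hA hF hU haa')⟩
end

section
/- Let (X,m) be a relative H*-algebra such that whenever g·f↓ there exist a pseudoinverse g* of g and a pseudoinverse f* of f with g*·g = f·f*. Then the subset U = { u ∈ X | u*·u = u for some pseudoinverse u* of u } satisfies the unit condition (U): for every f ∈ X there exist u,v ∈ U with f·u = f and v·f = f, and for every f ∈ X and u ∈ U, f·u↓ implies f·u = f and u·f↓ implies u·f = f. (Such a relative H*-algebra is a relative Frobenius algebra.) -/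
theorem stmt17 {X : Type*} (m : X → X → X → Prop) (star : Set X → Set X)
    (hstar : RelHstar m star)
    (hyp : ∀ g f, (∃ y, m g f y) →
      ∃ g' f', IsPseudoinverse m g g' ∧ IsPseudoinverse m f f' ∧
        ∃ e, m g' g e ∧ m f f' e) :
    CondU m { u : X | ∃ u', IsPseudoinverse m u u' ∧ m u' u u } := by
  obtain ⟨hM, hA, hH⟩ := hstar
  have uniq := hM.1
  -- Key lemma: x·x = x, x·y = y, y·x = x imply x = y.
  have lemL : ∀ x y : X, m x x x → m x y y → m y x x → x = y := by
    intro x y hxx hxy hyx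
    obtain ⟨t, ht, hyt⟩ := (hH.2 {y} x y).1.mp ⟨y, rfl, hxy⟩
    obtain ⟨s, hs, hxs⟩ := (hH.2 {x} y x).1.mp ⟨x, rfl, hyx⟩
    obtain ⟨r, hst, hxr⟩ := (hA x s t x).mp ⟨y, hxs, hyt⟩
    obtain ⟨x', hx', hxt⟩ := (hH.2 (star {x}) t r).2.mp ⟨s, hs, hst⟩
    rw [hH.1 {x}] at hx'
    have hx'' : x' = x := hx'
    rw [hx''] at hxt
    have htx : t = x := uniq x r t x hxt hxr
    rw [htx] at ht
    obtain ⟨y', hy', hxyx⟩ := (hH.2 (star {y}) x x).1.mp ⟨x, ht, hxx⟩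
    rw [hH.1 {y}] at hy'
    have hy'' : y' = y := hy'
    rw [hy''] at hxyx
    exact (uniq x y y x hxy hxyx).symm
  -- Mirror lemma: x·x = x, y·x = y, x·y = x imply x = y.
  have lemL' : ∀ x y : X, m x x x → m y x y → m x y x → x = y := by
    intro x y hxx hyx hxy
    obtain ⟨t, ht, hty⟩ := (hH.2 {y} x y).2.mp ⟨y, rfl, hyx⟩
    obtain ⟨s, hs, hsx⟩ := (hH.2 {x} y x).2.mp ⟨x, rfl, hxy⟩
    obtain ⟨r, hts, hrx⟩ := (hA t s x x).mpr ⟨y, hsx, hty⟩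
    obtain ⟨x', hx', hrt⟩ := (hH.2 (star {x}) t r).1.mp ⟨s, hs, hts⟩
    rw [hH.1 {x}] at hx'
    have hx'' : x' = x := hx'
    rw [hx''] at hrt
    have htx : t = x := uniq r x t x hrt hrx
    rw [htx] at ht
    obtain ⟨y', hy', hyxx⟩ := (hH.2 (star {y}) x x).2.mp ⟨x, ht, hxx⟩
    rw [hH.1 {y}] at hy'
    have hy'' : y' = y := hy'
    rw [hy''] at hyxx
    exact (uniq y x y x hyx hyxx).symm
  -- If u' is a pseudoinverse of u with u'·u = u, then u·u = u.
  have idem : ∀ u u' : X, IsPseudoinverse m u u' → m u' u u → m u u u := by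
    intro u u' hu' h
    obtain ⟨⟨p, hp1, hp2⟩, ⟨q, hq1, hq2⟩⟩ := hu'
    have hq : q = u := uniq u' u q u hq1 h
    rw [hq] at hq2
    obtain ⟨l, hl1, hl2⟩ := (hA u u' u u).mp ⟨u', hq2, h⟩
    have hl : l = u := uniq u' u l u hl1 h
    rw [hl] at hl2
    exact hl2
  -- Every element has a pseudoinverse.
  have exists_pinv : ∀ f : X, ∃ f', IsPseudoinverse m f f' := by
    intro f
    obtain ⟨h, g, hhg⟩ := hM.2 f
    obtain ⟨a', -, ha'⟩ := (hH.2 {h} g f).2.mp ⟨h, rfl, hhg⟩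
    obtain ⟨a'', f', -, hf', -⟩ := hyp a' f ⟨g, ha'⟩
    exact ⟨f', hf'⟩
  refine ⟨?_, ?_, ?_, ?_⟩
  · -- right units
    intro f
    obtain ⟨f', hf'⟩ := exists_pinv f
    obtain ⟨⟨p, hp1, hp2⟩, ⟨q, hq1, hq2⟩⟩ := hf'
    obtain ⟨l, hl1, hl2⟩ := (hA f f' f f).mp ⟨p, hp1, hp2⟩
    have hlq : l = q := uniq f' f l q hl1 hq1
    rw [hlq] at hl2
    -- hl2 : m f q f
    obtain ⟨k, hk1, hk2⟩ := (hA f' f q q).mpr ⟨f, hl2, hq1⟩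
    have hkq : k = q := uniq f' f k q hk1 hq1
    rw [hkq] at hk2
    -- hk2 : m q q q
    exact ⟨q, ⟨q, ⟨⟨q, hk2, hk2⟩, ⟨q, hk2, hk2⟩⟩, hk2⟩, hl2⟩
  · -- left units
    intro f
    obtain ⟨f', hf'⟩ := exists_pinv f
    obtain ⟨⟨p, hp1, hp2⟩, ⟨q, hq1, hq2⟩⟩ := hf'
    obtain ⟨l, hl1, hl2⟩ := (hA f' f f' f').mp ⟨q, hq1, hq2⟩
    have hlp : l = p := uniq f f' l p hl1 hp1
    rw [hlp] at hl2
    -- hl2 : m f' p f'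
    obtain ⟨k, hk1, hk2⟩ := (hA f f' p p).mpr ⟨f', hl2, hp1⟩
    have hkp : k = p := uniq f f' k p hk1 hp1
    rw [hkp] at hk2
    -- hk2 : m p p p
    exact ⟨p, ⟨p, ⟨⟨p, hk2, hk2⟩, ⟨p, hk2, hk2⟩⟩, hk2⟩, hp2⟩
  · -- f·u defined implies f·u = f
    intro f u hu hfu
    obtain ⟨u', hu', hu'u⟩ := hu
    have huuu := idem u u' hu' hu'u
    obtain ⟨f₁, u₁, hf₁, hu₁, e, hef, heu⟩ := hyp f u hfu
    -- m f e f
    obtain ⟨⟨p, hp1, hp2⟩, -⟩ := hf₁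
    obtain ⟨l, hl1, hl2⟩ := (hA f f₁ f f).mp ⟨p, hp1, hp2⟩
    have hle : l = e := uniq f₁ f l e hl1 hef
    rw [hle] at hl2
    -- hl2 : m f e f
    obtain ⟨⟨p', hp'1, hp'2⟩, -⟩ := hu₁
    have hpe : p' = e := uniq u u₁ p' e hp'1 heu
    rw [hpe] at hp'2
    -- hp'2 : m e u u
    obtain ⟨l₂, hl₂1, hl₂2⟩ := (hA u u u₁ e).mp ⟨u, huuu, heu⟩
    have hl₂e : l₂ = e := uniq u u₁ l₂ e hl₂1 heu
    rw [hl₂e] at hl₂2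
    -- hl₂2 : m u e e
    obtain ⟨l₃, hl₃1, hl₃2⟩ := (hA e u u₁ e).mp ⟨u, hp'2, heu⟩
    have hl₃e : l₃ = e := uniq u u₁ l₃ e hl₃1 heu
    rw [hl₃e] at hl₃2
    -- hl₃2 : m e e e
    have heq : e = u := lemL e u hl₃2 hp'2 hl₂2
    rw [heq] at hl2
    exact hl2
  · -- u·f defined implies u·f = f
    intro f u hu hufy
    obtain ⟨u', hu', hu'u⟩ := hu
    have huuu := idem u u' hu' hu'u
    obtain ⟨u₂, f₂, hu₂, hf₂, e, heu, hef⟩ := hyp u f hufy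
    -- heu : m u₂ u e, hef : m f f₂ e
    obtain ⟨⟨p, hp1, hp2⟩, -⟩ := hf₂
    have hpe : p = e := uniq f f₂ p e hp1 hef
    rw [hpe] at hp2
    -- hp2 : m e f f
    obtain ⟨⟨p₂, hp₂1, hp₂2⟩, ⟨q₂, hq₂1, hq₂2⟩⟩ := hu₂
    have hq₂e : q₂ = e := uniq u₂ u q₂ e hq₂1 heu
    rw [hq₂e] at hq₂2
    -- hq₂2 : m e u₂ u₂
    obtain ⟨l, hl1, hl2⟩ := (hA u u₂ u u).mp ⟨p₂, hp₂1, hp₂2⟩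
    have hle : l = e := uniq u₂ u l e hl1 heu
    rw [hle] at hl2
    -- hl2 : m u e u
    obtain ⟨k, hk1, hk2⟩ := (hA u₂ u u e).mpr ⟨u, huuu, heu⟩
    have hke : k = e := uniq u₂ u k e hk1 heu
    rw [hke] at hk2
    -- hk2 : m e u e
    obtain ⟨k₃, hk₃1, hk₃2⟩ := (hA e u₂ u e).mp ⟨u₂, hq₂2, heu⟩
    have hk₃e : k₃ = e := uniq u₂ u k₃ e hk₃1 heu
    rw [hk₃e] at hk₃2
    -- hk₃2 : m e e e
    have heq : u = e := lemL' u e huuu hk2 hl2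
    rw [heq]
    exact hp2
end
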